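/- Let M be a map with flag set F and generators s0, s1, s2, and let r0, r1, r2 be the truncation generators on F × {0,1,2}. Suppose M is a k-orbit map and Tr(M) is either a k-orbit or a (3k/2)-orbit map (i.e. Γ(Tr(M)) has fewer than 3k orbits on F × {0,1,2}). Then there is a partition of F into two nonempty sets A and B such that s0(A) = A, s1(A) = A and s2(A) = B; that is, the flag graph of M admits a quotient isomorphic to the symmetry type graph 2_{01}. -/

import Mathlib

/-- if M is a k-orbit map and Tr(M) has fewer than 3k flag orbits
(i.e. Tr(M) is a k-orbit or 3k/2-orbit map), then the flags of M admit a bipartition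
(A, B) with s0(A) = A, s1(A) = A and s2(A) = B: the flag graph of M has a quotient
isomorphic to the symmetry type graph 2_{01}. -/
theorem truncation_T_compatible
    {F : Type*} [Fintype F] [Nonempty F]
    (s0 s1 s2 : Equiv.Perm F)
    (hs0i : s0 * s0 = 1) (hs0f : ∀ x, s0 x ≠ x)
    (hs1i : s1 * s1 = 1) (hs1f : ∀ x, s1 x ≠ x)
    (hs2i : s2 * s2 = 1) (hs2f : ∀ x, s2 x ≠ x)
    (hcomm : s0 * s2 = s2 * s0)
    (hs02i : (s0 * s2) * (s0 * s2) = 1) (hs02f : ∀ x, (s0 * s2) x ≠ x)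
    (htrans : ∀ x y : F, ∃ g ∈ Subgroup.closure ({s0, s1, s2} : Set (Equiv.Perm F)), g x = y)
    (r0 r1 r2 : Equiv.Perm (F × Fin 3))
    (hr0 : ∀ Φ : F, r0 (Φ, 0) = (s1 Φ, 0) ∧ r0 (Φ, 1) = (s0 Φ, 1) ∧ r0 (Φ, 2) = (s1 Φ, 2))
    (hr1 : ∀ Φ : F, r1 (Φ, 0) = (s2 Φ, 0) ∧ r1 (Φ, 1) = (Φ, 2) ∧ r1 (Φ, 2) = (Φ, 1))
    (hr2 : ∀ Φ : F, r2 (Φ, 0) = (Φ, 2) ∧ r2 (Φ, 1) = (s2 Φ, 1) ∧ r2 (Φ, 2) = (Φ, 0))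
    (k : ℕ)
    (hk : Nat.card (MulAction.orbitRel.Quotient
      (↥(Subgroup.centralizer ({s0, s1, s2} : Set (Equiv.Perm F)))) F) = k)
    (hTr : Nat.card (MulAction.orbitRel.Quotient
      (↥(Subgroup.centralizer ({r0, r1, r2} : Set (Equiv.Perm (F × Fin 3))))) (F × Fin 3)) < 3 * k) :
    ∃ A B : Set F, A.Nonempty ∧ B.Nonempty ∧ A ∪ B = Set.univ ∧ A ∩ B = ∅ ∧
      ⇑s0 '' A = A ∧ ⇑s1 '' A = A ∧ ⇑s2 '' A = B := by
  classical
  obtain ⟨Φ0⟩ := (inferInstance : Nonempty F)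
  -- pointwise involution facts
  have ps2 : ∀ x, s2 (s2 x) = x := by
    intro x
    have : (s2 * s2) x = (1 : Equiv.Perm F) x := by rw [hs2i]
    simpa using this
  have hs2inv : s2⁻¹ = s2 := by
    rw [eq_comm, eq_inv_iff_mul_eq_one]; exact hs2i
  have ps02 : ∀ x, s0 (s2 x) = s2 (s0 x) := by
    intro x
    have : (s0 * s2) x = (s2 * s0) x := by rw [hcomm]
    simpa using this
  -- the even-parity subgroup N
  set N : Subgroup (Equiv.Perm F) := Subgroup.closure {s0, s1, s2 * s1 * s2} with hNdef
  have hs0N : s0 ∈ N := Subgroup.subset_closure (by simp)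
  have hs1N : s1 ∈ N := Subgroup.subset_closure (by simp)
  have htN : s2 * s1 * s2 ∈ N := Subgroup.subset_closure (by simp)
  have hconj0 : s2 * s0 * s2 = s0 := by
    have h1 : s2 * s0 * s2 = s2 * (s0 * s2) := by group
    rw [h1, hcomm, show s2 * (s2 * s0) = (s2 * s2) * s0 from by group, hs2i, one_mul]
  have hconjN : ∀ n ∈ N, s2 * n * s2 ∈ N := by
    intro n hn
    induction hn using Subgroup.closure_induction with
    | mem x hx =>
      simp only [Set.mem_insert_iff, Set.mem_singleton_iff] at hx
      rcases hx with h | h | h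
      · rw [h, hconj0]; exact hs0N
      · rw [h]; exact htN
      · rw [h]
        have h1 : s2 * (s2 * s1 * s2) * s2 = (s2 * s2) * s1 * (s2 * s2) := by group
        rw [h1, hs2i, one_mul, mul_one]; exact hs1N
    | one => rw [mul_one, hs2i]; exact Subgroup.one_mem N
    | mul x y hx hy ihx ihy =>
      have h1 : s2 * (x * y) * s2 = (s2 * x * s2) * (s2 * y * s2) := by
        have h2 : (s2 * x * s2) * (s2 * y * s2) = s2 * x * (s2 * s2) * y * s2 := by group
        rw [h2, hs2i]; group
      rw [h1]; exact mul_mem ihx ihy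
    | inv x hx ih =>
      have h1 : s2 * x⁻¹ * s2 = (s2 * x * s2)⁻¹ := by
        rw [mul_inv_rev, mul_inv_rev, hs2inv, mul_assoc]
      rw [h1]; exact inv_mem ih
  -- the candidate set A
  set A : Set F := {Ψ | ∃ n ∈ N, n Φ0 = Ψ} with hAdef
  have hA0mem : Φ0 ∈ A := ⟨1, Subgroup.one_mem N, rfl⟩
  have lA : ∀ m ∈ N, ⇑m '' A = A := by
    intro m hm
    apply Set.Subset.antisymm
    · rintro _ ⟨_, ⟨n, hn, rfl⟩, rfl⟩
      exact ⟨m * n, mul_mem hm hn, rfl⟩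
    · rintro _ ⟨n, hn, rfl⟩
      refine ⟨(m⁻¹ * n) Φ0, ⟨m⁻¹ * n, mul_mem (inv_mem hm) hn, rfl⟩, ?_⟩
      simp [Equiv.Perm.mul_apply]
  by_cases hc : ∃ n ∈ N, n Φ0 = s2 Φ0
  · -- hard case: N is transitive, and then Tr(M) has exactly 3k orbits, contradiction
    exfalso
    obtain ⟨n0, hn0, hn0e⟩ := hc
    have hA2 : ⇑s2 '' A = A := by
      apply Set.Subset.antisymm
      · rintro _ ⟨_, ⟨n, hn, rfl⟩, rfl⟩
        refine ⟨(s2 * n * s2) * n0, mul_mem (hconjN n hn) hn0, ?_⟩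
        simp [Equiv.Perm.mul_apply, hn0e, ps2]
      · rintro _ ⟨n, hn, rfl⟩
        refine ⟨((s2 * n * s2) * n0) Φ0, ⟨(s2 * n * s2) * n0, mul_mem (hconjN n hn) hn0, rfl⟩, ?_⟩
        simp [Equiv.Perm.mul_apply, hn0e, ps2]
    -- N is transitive
    have himgA : ∀ g ∈ Subgroup.closure ({s0, s1, s2} : Set (Equiv.Perm F)), ⇑g '' A = A := by
      intro g hg
      induction hg using Subgroup.closure_induction with
      | mem x hx =>
        simp only [Set.mem_insert_iff, Set.mem_singleton_iff] at hx
        rcases hx with h | h | h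
        · rw [h]; exact lA s0 hs0N
        · rw [h]; exact lA s1 hs1N
        · rw [h]; exact hA2
      | one => simp
      | mul x y hx hy ihx ihy =>
        rw [show ⇑(x * y) = ⇑x ∘ ⇑y from rfl, Set.image_comp, ihy, ihx]
      | inv x hx ih =>
        conv_lhs => rw [← ih]
        rw [← Set.image_comp]
        simp
    have hAuniv : ∀ Ψ, Ψ ∈ A := by
      intro Ψ
      obtain ⟨g, hg, hge⟩ := htrans Φ0 Ψ
      rw [← hge, ← himgA g hg]
      exact ⟨Φ0, hA0mem, rfl⟩
    have hN2 : ∀ Φ Ψ : F, ∃ n ∈ N, n Φ = Ψ := by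
      intro Φ Ψ
      obtain ⟨n1, hn1, e1⟩ := hAuniv Φ
      obtain ⟨n2, hn2, e2⟩ := hAuniv Ψ
      refine ⟨n2 * n1⁻¹, mul_mem hn2 (inv_mem hn1), ?_⟩
      rw [← e1, ← e2]
      simp [Equiv.Perm.mul_apply]
    -- truncation side
    -- components of the r-actions
    have r00 := fun Φ => (hr0 Φ).1
    have r01 := fun Φ => (hr0 Φ).2.1
    have r02 := fun Φ => (hr0 Φ).2.2
    have r10 := fun Φ => (hr1 Φ).1
    have r11 := fun Φ => (hr1 Φ).2.1
    have r12 := fun Φ => (hr1 Φ).2.2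
    have r20 := fun Φ => (hr2 Φ).1
    have r21 := fun Φ => (hr2 Φ).2.1
    have r22 := fun Φ => (hr2 Φ).2.2
    set Δ : Subgroup (Equiv.Perm (F × Fin 3)) :=
      Subgroup.centralizer ({r0, r1, r2} : Set (Equiv.Perm (F × Fin 3))) with hΔdef
    set Γ : Subgroup (Equiv.Perm F) :=
      Subgroup.centralizer ({s0, s1, s2} : Set (Equiv.Perm F)) with hΓdef
    -- pointwise commutation for elements of Δ
    have comm3 : ∀ g ∈ Δ, (∀ x, r0 (g x) = g (r0 x)) ∧ (∀ x, r1 (g x) = g (r1 x)) ∧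
        (∀ x, r2 (g x) = g (r2 x)) := by
      intro g hg
      have cg := Subgroup.mem_centralizer_iff.mp hg
      refine ⟨fun x => ?_, fun x => ?_, fun x => ?_⟩
      · have h := Equiv.ext_iff.mp (cg r0 (by simp)) x
        simpa [Equiv.Perm.mul_apply] using h
      · have h := Equiv.ext_iff.mp (cg r1 (by simp)) x
        simpa [Equiv.Perm.mul_apply] using h
      · have h := Equiv.ext_iff.mp (cg r2 (by simp)) x
        simpa [Equiv.Perm.mul_apply] using h
    -- class of g(Φ,1) is always 1
    have key1 : ∀ g ∈ Δ, ∀ Φ : F, (g (Φ, (1 : Fin 3))).2 = 1 := by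
      intro g hg
      obtain ⟨e0, e1, e2⟩ := comm3 g hg
      -- second components are preserved by r0, r1∘r0∘r1, r2∘r1∘r0∘r1∘r2
      have sr0 : ∀ x : F × Fin 3, (r0 x).2 = x.2 := by
        rintro ⟨Ψ, i⟩
        fin_cases i <;> simp [r00 Ψ, r01 Ψ, r02 Ψ]
      have sw1 : ∀ x : F × Fin 3, (r1 (r0 (r1 x))).2 = x.2 := by
        rintro ⟨Ψ, i⟩
        fin_cases i <;> simp [r10, r11, r12, r00, r01, r02]
      have sw2 : ∀ x : F × Fin 3, (r2 (r1 (r0 (r1 (r2 x))))).2 = x.2 := by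
        rintro ⟨Ψ, i⟩
        fin_cases i <;> simp [r10, r11, r12, r00, r01, r02, r20, r21, r22]
      -- constancy of the class of g(·,1) along N
      have hP : ∀ n ∈ N, ∀ Φ : F, (g (n Φ, (1 : Fin 3))).2 = (g (Φ, 1)).2 := by
        intro n hn
        induction hn using Subgroup.closure_induction with
        | mem x hx =>
          simp only [Set.mem_insert_iff, Set.mem_singleton_iff] at hx
          rcases hx with h | h | h
          · intro Φ
            rw [h]
            have ha : g (s0 Φ, (1 : Fin 3)) = r0 (g (Φ, 1)) := by
              rw [← r01 Φ, ← e0]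
            rw [ha, sr0]
          · intro Φ
            rw [h]
            have b2 : g (Φ, (2 : Fin 3)) = r1 (g (Φ, 1)) := by rw [← r11 Φ, ← e1]
            have b3 : g (s1 Φ, (2 : Fin 3)) = r0 (g (Φ, 2)) := by rw [← r02 Φ, ← e0]
            have b4 : g (s1 Φ, (1 : Fin 3)) = r1 (g (s1 Φ, 2)) := by
              rw [← r12 (s1 Φ), ← e1]
            rw [b4, b3, b2, sw1]
          · intro Φ
            rw [h]
            have a1 : g (s2 Φ, (1 : Fin 3)) = r2 (g (Φ, 1)) := by rw [← r21 Φ, ← e2]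
            have a2 : g (s2 Φ, (2 : Fin 3)) = r1 (g (s2 Φ, 1)) := by
              rw [← r11 (s2 Φ), ← e1]
            have a3 : g (s1 (s2 Φ), (2 : Fin 3)) = r0 (g (s2 Φ, 2)) := by
              rw [← r02 (s2 Φ), ← e0]
            have a4 : g (s1 (s2 Φ), (1 : Fin 3)) = r1 (g (s1 (s2 Φ), 2)) := by
              rw [← r12 (s1 (s2 Φ)), ← e1]
            have a5 : g (s2 (s1 (s2 Φ)), (1 : Fin 3)) = r2 (g (s1 (s2 Φ), 1)) := by
              rw [← r21 (s1 (s2 Φ)), ← e2]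
            have hx3 : (s2 * s1 * s2) Φ = s2 (s1 (s2 Φ)) := rfl
            rw [hx3, a5, a4, a3, a2, a1, sw2]
        | one => intro Φ; simp
        | mul x y hx hy ihx ihy =>
          intro Φ
          have : (x * y) Φ = x (y Φ) := rfl
          rw [this, ihx (y Φ), ihy Φ]
        | inv x hx ih =>
          intro Φ
          have h := ih (x⁻¹ Φ)
          rw [show x (x⁻¹ Φ) = Φ from by simp] at h
          exact h.symm
      have cst : ∀ Φ Ψ : F, (g (Φ, (1 : Fin 3))).2 = (g (Ψ, 1)).2 := by
        intro Φ Ψ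
        obtain ⟨n, hn, he⟩ := hN2 Ψ Φ
        rw [← he]; exact hP n hn Ψ
      -- now pin down the class
      have h2 : (r2 (g (Φ0, (1 : Fin 3)))).2 = (g (Φ0, 1)).2 := by
        have h : g (s2 Φ0, (1 : Fin 3)) = r2 (g (Φ0, 1)) := by rw [← r21 Φ0, ← e2]
        rw [← h]; exact cst (s2 Φ0) Φ0
      rcases hgy : g (Φ0, (1 : Fin 3)) with ⟨Ψ, i⟩
      rw [hgy] at h2
      intro Φ
      rw [cst Φ Φ0, hgy]
      fin_cases i
      · exfalso; simp [r20] at h2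
      · simp
      · exfalso; simp [r22] at h2
    -- full form of an automorphism of the truncation
    have keyform : ∀ g ∈ Δ, ∀ Φ : F,
        g (Φ, (1 : Fin 3)) = ((g (Φ, 1)).1, 1) ∧ g (Φ, 2) = ((g (Φ, 1)).1, 2) ∧
        g (Φ, 0) = ((g (Φ, 1)).1, 0) := by
      intro g hg Φ
      obtain ⟨e0, e1, e2⟩ := comm3 g hg
      have f1 : g (Φ, (1 : Fin 3)) = ((g (Φ, 1)).1, 1) := by
        have : g (Φ, (1 : Fin 3)) = ((g (Φ, 1)).1, (g (Φ, 1)).2) := rfl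
        rw [this, key1 g hg Φ]
      have f2 : g (Φ, (2 : Fin 3)) = ((g (Φ, 1)).1, 2) := by
        have h : g (Φ, (2 : Fin 3)) = r1 (g (Φ, 1)) := by rw [← r11 Φ, ← e1]
        rw [h, f1, r11]
      have f0 : g (Φ, (0 : Fin 3)) = ((g (Φ, 1)).1, 0) := by
        have h : g (Φ, (0 : Fin 3)) = r2 (g (Φ, 2)) := by rw [← r22 Φ, ← e2]
        rw [h, f2, r22]
      exact ⟨f1, f2, f0⟩
    have keycomm : ∀ g ∈ Δ, ∀ Φ : F,
        (g (s0 Φ, (1 : Fin 3))).1 = s0 ((g (Φ, 1)).1) ∧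
        (g (s1 Φ, (1 : Fin 3))).1 = s1 ((g (Φ, 1)).1) ∧
        (g (s2 Φ, (1 : Fin 3))).1 = s2 ((g (Φ, 1)).1) := by
      intro g hg Φ
      obtain ⟨e0, e1, e2⟩ := comm3 g hg
      refine ⟨?_, ?_, ?_⟩
      · have h : g (s0 Φ, (1 : Fin 3)) = r0 (g (Φ, 1)) := by rw [← r01 Φ, ← e0]
        rw [h, (keyform g hg Φ).1, r01]
      · have h : g (s1 Φ, (0 : Fin 3)) = r0 (g (Φ, 0)) := by rw [← r00 Φ, ← e0]
        have h2 := (keyform g hg (s1 Φ)).2.2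
        rw [h2, (keyform g hg Φ).2.2, r00] at h
        exact (Prod.ext_iff.mp h).1
      · have h : g (s2 Φ, (1 : Fin 3)) = r2 (g (Φ, 1)) := by rw [← r21 Φ, ← e2]
        rw [h, (keyform g hg Φ).1, r21]
    -- every automorphism of Tr(M) comes from an automorphism of M
    have hdesc : ∀ g ∈ Δ, ∃ γ : Equiv.Perm F, γ ∈ Γ ∧ ∀ Φ, γ Φ = (g (Φ, (1 : Fin 3))).1 := by
      intro g hg
      have hginv : g⁻¹ ∈ Δ := inv_mem hg
      refine ⟨⟨fun Φ => (g (Φ, 1)).1, fun Φ => (g⁻¹ (Φ, 1)).1, ?_, ?_⟩, ?_, fun _ => rfl⟩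
      · intro Φ
        show (g⁻¹ ((g (Φ, 1)).1, 1)).1 = Φ
        rw [← (keyform g hg Φ).1]
        simp
      · intro Φ
        show (g ((g⁻¹ (Φ, 1)).1, 1)).1 = Φ
        rw [← (keyform g⁻¹ hginv Φ).1]
        simp
      · rw [hΓdef]
        rw [Subgroup.mem_centralizer_iff]
        intro s hs
        simp only [Set.mem_insert_iff, Set.mem_singleton_iff] at hs
        rcases hs with h | h | h
        · rw [h]; ext Φ
          show s0 ((g (Φ, 1)).1) = (g (s0 Φ, 1)).1
          exact ((keycomm g hg Φ).1).symm
        · rw [h]; ext Φ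
          show s1 ((g (Φ, 1)).1) = (g (s1 Φ, 1)).1
          exact ((keycomm g hg Φ).2.1).symm
        · rw [h]; ext Φ
          show s2 ((g (Φ, 1)).1) = (g (s2 Φ, 1)).1
          exact ((keycomm g hg Φ).2.2).symm
    -- every automorphism of M lifts to Tr(M)
    have hlift : ∀ γ : Equiv.Perm F, γ ∈ Γ →
        ∃ g : Equiv.Perm (F × Fin 3), g ∈ Δ ∧ ∀ x : F × Fin 3, g x = (γ x.1, x.2) := by
      intro γ hγ
      have cγ := Subgroup.mem_centralizer_iff.mp hγ
      have c0 : ∀ Φ, s0 (γ Φ) = γ (s0 Φ) := by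
        intro Φ
        have h := Equiv.ext_iff.mp (cγ s0 (by simp)) Φ
        simpa [Equiv.Perm.mul_apply] using h
      have c1 : ∀ Φ, s1 (γ Φ) = γ (s1 Φ) := by
        intro Φ
        have h := Equiv.ext_iff.mp (cγ s1 (by simp)) Φ
        simpa [Equiv.Perm.mul_apply] using h
      have c2 : ∀ Φ, s2 (γ Φ) = γ (s2 Φ) := by
        intro Φ
        have h := Equiv.ext_iff.mp (cγ s2 (by simp)) Φ
        simpa [Equiv.Perm.mul_apply] using h
      refine ⟨Equiv.prodCongr γ (Equiv.refl (Fin 3)), ?_, fun x => rfl⟩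
      rw [hΔdef, Subgroup.mem_centralizer_iff]
      intro s hs
      have happ : ∀ x : F × Fin 3, (Equiv.prodCongr γ (Equiv.refl (Fin 3))) x = (γ x.1, x.2) :=
        fun x => rfl
      simp only [Set.mem_insert_iff, Set.mem_singleton_iff] at hs
      rcases hs with h | h | h
      · rw [h]; apply Equiv.ext; rintro ⟨Ψ, i⟩
        fin_cases i <;>
          simp [Equiv.Perm.mul_apply, Equiv.prodCongr_apply, Prod.map,
            r00, r01, r02, r10, r11, r12, r20, r21, r22, c0, c1, c2]
      · rw [h]; apply Equiv.ext; rintro ⟨Ψ, i⟩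
        fin_cases i <;>
          simp [Equiv.Perm.mul_apply, Equiv.prodCongr_apply, Prod.map,
            r00, r01, r02, r10, r11, r12, r20, r21, r22, c0, c1, c2]
      · rw [h]; apply Equiv.ext; rintro ⟨Ψ, i⟩
        fin_cases i <;>
          simp [Equiv.Perm.mul_apply, Equiv.prodCongr_apply, Prod.map,
            r00, r01, r02, r10, r11, r12, r20, r21, r22, c0, c1, c2]
    -- the orbit-counting bijection
    have e : (MulAction.orbitRel.Quotient (↥Δ) (F × Fin 3)) ≃
        (MulAction.orbitRel.Quotient (↥Γ) F) × Fin 3 := by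
      refine Equiv.ofBijective
        (Quotient.lift
          (fun x : F × Fin 3 =>
            ((Quotient.mk'' x.1 : MulAction.orbitRel.Quotient (↥Γ) F), x.2)) ?_) ⟨?_, ?_⟩
      · rintro ⟨Φ, i⟩ ⟨Ψ, j⟩ hab
        have hab' := MulAction.orbitRel_apply.mp hab
        obtain ⟨g, hge⟩ := MulAction.mem_orbit_iff.mp hab'
        have hgΔ : (g : Equiv.Perm (F × Fin 3)) ∈ Δ := g.2
        obtain ⟨γ, hγΓ, hγe⟩ := hdesc _ hgΔ
        have hge' : (g : Equiv.Perm (F × Fin 3)) (Ψ, j) = (Φ, i) := hge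
        have hγΨ : γ Ψ = ((g : Equiv.Perm (F × Fin 3)) (Ψ, 1)).1 := hγe Ψ
        have hcl : (g : Equiv.Perm (F × Fin 3)) (Ψ, j) =
            (((g : Equiv.Perm (F × Fin 3)) (Ψ, 1)).1, j) := by
          obtain ⟨f1, f2, f0⟩ := keyform _ hgΔ Ψ
          fin_cases j
          · simpa using f0
          · simpa using f1
          · simpa using f2
        rw [hcl] at hge'
        have hmain : Φ = γ Ψ ∧ i = j := by
          have := Prod.ext_iff.mp hge'
          exact ⟨by rw [hγΨ]; exact this.1.symm, this.2.symm⟩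
        have hq : (Quotient.mk'' Φ : MulAction.orbitRel.Quotient (↥Γ) F) = Quotient.mk'' Ψ := by
          apply Quotient.eq''.mpr
          apply MulAction.orbitRel_apply.mpr
          apply MulAction.mem_orbit_iff.mpr
          exact ⟨⟨γ, hγΓ⟩, hmain.1.symm⟩
        simp only [hq, hmain.2]
      · -- injective
        intro a b
        refine Quotient.inductionOn₂' a b ?_
        rintro ⟨Φ, i⟩ ⟨Ψ, j⟩ h
        simp only [Quotient.lift_mk, Prod.mk.injEq] at h
        obtain ⟨hq, hij⟩ := h
        have hrel := MulAction.orbitRel_apply.mp (Quotient.eq''.mp hq)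
        obtain ⟨γ, hγe⟩ := MulAction.mem_orbit_iff.mp hrel
        obtain ⟨g, hgΔ, hge⟩ := hlift (γ : Equiv.Perm F) γ.2
        apply Quotient.sound'
        apply MulAction.orbitRel_apply.mpr
        apply MulAction.mem_orbit_iff.mpr
        refine ⟨⟨g, hgΔ⟩, ?_⟩
        show g (Ψ, j) = (Φ, i)
        rw [hge (Ψ, j)]
        have : (γ : Equiv.Perm F) Ψ = Φ := hγe
        rw [this, hij]
      · -- surjective
        rintro ⟨q, i⟩
        refine Quotient.inductionOn' q fun Ψ => ?_
        exact ⟨Quotient.mk'' (Ψ, i), rfl⟩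
    have hcard := Nat.card_congr e
    rw [Nat.card_prod] at hcard
    have h3 : Nat.card (Fin 3) = 3 := by simp
    rw [h3] at hcard
    rw [hk] at hcard
    rw [hcard] at hTr
    omega
  · -- easy case: take A and B = s2 '' A
    refine ⟨A, ⇑s2 '' A, ⟨Φ0, hA0mem⟩, ⟨s2 Φ0, Φ0, hA0mem, rfl⟩, ?_, ?_, lA s0 hs0N, lA s1 hs1N, rfl⟩
    · -- A ∪ s2 '' A = univ
      have hB0 : ⇑s0 '' (⇑s2 '' A) = ⇑s2 '' A := by
        rw [← Set.image_comp, show ⇑s0 ∘ ⇑s2 = ⇑s2 ∘ ⇑s0 from funext fun x => ps02 x,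
          Set.image_comp, lA s0 hs0N]
      have hB1 : ⇑s1 '' (⇑s2 '' A) = ⇑s2 '' A := by
        have hfun : ⇑s1 ∘ ⇑s2 = ⇑s2 ∘ ⇑(s2 * s1 * s2) := by
          funext x
          show s1 (s2 x) = s2 ((s2 * s1 * s2) x)
          show s1 (s2 x) = s2 (s2 (s1 (s2 x)))
          rw [ps2]
        rw [← Set.image_comp, hfun, Set.image_comp, lA _ htN]
      have hB2 : ⇑s2 '' (⇑s2 '' A) = A := by
        rw [← Set.image_comp, show ⇑s2 ∘ ⇑s2 = id from funext fun x => ps2 x, Set.image_id]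
      have himgS : ∀ g ∈ Subgroup.closure ({s0, s1, s2} : Set (Equiv.Perm F)),
          ⇑g '' (A ∪ ⇑s2 '' A) = A ∪ ⇑s2 '' A := by
        intro g hg
        induction hg using Subgroup.closure_induction with
        | mem x hx =>
          simp only [Set.mem_insert_iff, Set.mem_singleton_iff] at hx
          rcases hx with h | h | h
          · rw [h, Set.image_union, lA s0 hs0N, hB0]
          · rw [h, Set.image_union, lA s1 hs1N, hB1]
          · rw [h, Set.image_union, hB2, Set.union_comm]
        | one => simp
        | mul x y hx hy ihx ihy =>
          rw [show ⇑(x * y) = ⇑x ∘ ⇑y from rfl, Set.image_comp, ihy, ihx]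
        | inv x hx ih =>
          conv_lhs => rw [← ih]
          rw [← Set.image_comp]
          simp
      apply Set.eq_univ_iff_forall.mpr
      intro Ψ
      obtain ⟨g, hg, hge⟩ := htrans Φ0 Ψ
      rw [← hge, ← himgS g hg]
      exact ⟨Φ0, Or.inl hA0mem, rfl⟩
    · -- A ∩ s2 '' A = ∅
      apply Set.eq_empty_iff_forall_notMem.mpr
      rintro Ψ ⟨⟨n, hn, hne⟩, ⟨_, ⟨n', hn', rfl⟩, hse⟩⟩
      apply hc
      refine ⟨(s2 * n'⁻¹ * s2) * n, mul_mem (hconjN n'⁻¹ (inv_mem hn')) hn, ?_⟩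
      have : ((s2 * n'⁻¹ * s2) * n) Φ0 = s2 (n'⁻¹ (s2 (n Φ0))) := rfl
      rw [this, hne, ← hse]
      simp [ps2]
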